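/- There exists an ω-sequence of (infinite) biextensional Chu spaces in iB which has no colimit in iB: take Cᵢ = (ℕ⁺, rᵢ, ℕ) with rᵢ(a,x) = 1 iff a divides (x+i−1), and φᵢ = (id, x ↦ x+1); any cocone (ψᵢ : Cᵢ → C) forces the attribute set of C to be empty, so C cannot be separable (its object set has more than one element). -/

import Mathlib

universe u

/-- A Chu space over `S`: objects `A`, attributes `X`, satisfaction `r`. -/
structure ChuSpace (S : Type u) : Type (u+1) where
  A : Type u
  X : Type u
  r : A → X → S

/-- A Chu morphism `(f, g)`. -/
@[ext]
structure ChuHom {S : Type u} (C D : ChuSpace S) : Type u where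
  f : C.A → D.A
  g : D.X → C.X
  comm : ∀ a y, D.r (f a) y = C.r a (g y)

variable {S : Type u}

/-- Composition of Chu morphisms: `ψ.comp φ = ψ ∘ φ`. -/
def ChuHom.comp {C D E : ChuSpace S} (ψ : ChuHom D E) (φ : ChuHom C D) : ChuHom C E where
  f := ψ.f ∘ φ.f
  g := φ.g ∘ ψ.g
  comm := fun a y => by
    simp only [Function.comp_apply]
    rw [ψ.comm, φ.comm]

def ChuHom.idHom (C : ChuSpace S) : ChuHom C C := ⟨id, id, fun _ _ => rfl⟩

/-- `φ` is an isomorphism of Chu spaces. -/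
def ChuIso {C D : ChuSpace S} (φ : ChuHom C D) : Prop :=
  ∃ ψ : ChuHom D C, φ.comp ψ = ChuHom.idHom D ∧ ψ.comp φ = ChuHom.idHom C

/-- No repeated columns. -/
def ChuExtensional (C : ChuSpace S) : Prop :=
  ∀ x y : C.X, (∀ a, C.r a x = C.r a y) → x = y

/-- No repeated rows. -/
def ChuSeparable (C : ChuSpace S) : Prop :=
  ∀ a b : C.A, (∀ x, C.r a x = C.r b x) → a = b

def ChuBiextensional (C : ChuSpace S) : Prop := ChuExtensional C ∧ ChuSeparable C

/-- Discrete: every function `A → S` is realized by a column. -/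
def ChuDiscrete (C : ChuSpace S) : Prop :=
  ∀ f : C.A → S, ∃ x : C.X, ∀ a, C.r a x = f a

/-- `φ` is monic in the full subcategory of Chu spaces satisfying `Obj`. -/
def MonicIn (Obj : ChuSpace S → Prop) {C D : ChuSpace S} (φ : ChuHom C D) : Prop :=
  ∀ (E : ChuSpace S), Obj E → ∀ ψ₁ ψ₂ : ChuHom E C,
    φ.comp ψ₁ = φ.comp ψ₂ → ψ₁ = ψ₂

/-- Monics of the category `C` of Chu spaces: injective forward, surjective backward. -/
def IsMonoC {C D : ChuSpace S} (φ : ChuHom C D) : Prop :=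
  Function.Injective φ.f ∧ Function.Surjective φ.g

/-- Monics of the categories `E` and `B`: injective forward component. -/
def IsMonoE {C D : ChuSpace S} (φ : ChuHom C D) : Prop :=
  Function.Injective φ.f

/-- An ω-sequence of Chu spaces. -/
structure ChuSeq (S : Type u) : Type (u+1) where
  C : ℕ → ChuSpace S
  φ : ∀ i, ChuHom (C i) (C (i+1))

/-- A cocone from the ω-sequence `T` to `C`. -/
structure Cocone (T : ChuSeq S) (C : ChuSpace S) : Type u where
  ψ : ∀ i, ChuHom (T.C i) C
  compat : ∀ i, (ψ (i+1)).comp (T.φ i) = ψ i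

/-- `c` is a colimit of `T` in the subcategory with objects `Obj` and morphisms `Mor`. -/
structure IsColimit (Obj : ChuSpace S → Prop)
    (Mor : ∀ C D : ChuSpace S, ChuHom C D → Prop)
    (T : ChuSeq S) (C : ChuSpace S) (c : Cocone T C) : Prop where
  obj : Obj C
  mor : ∀ i, Mor _ _ (c.ψ i)
  univ : ∀ (C' : ChuSpace S), Obj C' → ∀ (c' : Cocone T C'), (∀ i, Mor _ _ (c'.ψ i)) →
      ∃! μ : ChuHom C C', Mor _ _ μ ∧ ∀ i, μ.comp (c.ψ i) = c'.ψ i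

/-- A finite object in the subcategory `(Obj, Mor)`: every morphism into a colimit of an
ω-sequence factors through some stage. -/
def FiniteObjIn (Obj : ChuSpace S → Prop) (Mor : ∀ C D : ChuSpace S, ChuHom C D → Prop)
    (F : ChuSpace S) : Prop :=
  Obj F ∧ ∀ (T : ChuSeq S), (∀ i, Obj (T.C i)) → (∀ i, Mor _ _ (T.φ i)) →
    ∀ (C : ChuSpace S) (c : Cocone T C), IsColimit Obj Mor T C c →
      ∀ φ : ChuHom F C, Mor _ _ φ →
        ∃ (i : ℕ) (ψ : ChuHom F (T.C i)), Mor _ _ ψ ∧ (c.ψ i).comp ψ = φ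

/-- Strongly finite: a finite object of `iC` with finite object set,
finite and non-empty attribute set. -/
def StronglyFinite (F : ChuSpace S) : Prop :=
  FiniteObjIn (fun _ => True) (fun _ _ φ => IsMonoC φ) F ∧
    Finite F.A ∧ Finite F.X ∧ Nonempty F.X


/-- The biextensional Chu space `(ℕ⁺, rᵢ, ℕ)` with `rᵢ a x = 1` iff `a ∣ (x + i)`
(indices shifted so that `i` ranges over `ℕ`). -/
def divChu (i : ℕ) : ChuSpace.{0} Bool :=
  ⟨{n : ℕ // 0 < n}, ℕ, fun a x => decide (a.1 ∣ (x + i))⟩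

/-- The connecting morphism `(id, x ↦ x + 1)`. -/
def divHom (i : ℕ) : ChuHom (divChu i) (divChu (i+1)) where
  f := fun a => a
  g := fun x : ℕ => (x + 1 : ℕ)
  comm := by
    show ∀ (a : {n : ℕ // 0 < n}) (x : ℕ),
      decide (a.1 ∣ (x + (i+1))) = decide (a.1 ∣ ((x + 1) + i))
    intro a x
    have h : x + (i+1) = (x + 1) + i := by omega
    rw [h]

def divSeq : ChuSeq Bool := ⟨divChu, divHom⟩

theorem divChu_biext (i : ℕ) : ChuBiextensional (divChu i) := by
  constructor
  · refine fun (x y : ℕ) h => ?_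
    have h' : ∀ a : ℕ, 0 < a → (a ∣ x + i ↔ a ∣ y + i) := by
      intro a ha
      have := h ⟨a, ha⟩
      simpa [divChu] using this
    have : x + i = y + i := by
      rcases Nat.eq_zero_or_pos (x + i) with hx | hx
      · rcases Nat.eq_zero_or_pos (y + i) with hy | hy
        · omega
        · have hd := (h' (y + i + 1) (by omega)).mp (by simp [hx])
          have := Nat.le_of_dvd hy hd
          omega
      · rcases Nat.eq_zero_or_pos (y + i) with hy | hy
        · have hd := (h' (x + i + 1) (by omega)).mpr (by simp [hy])
          have := Nat.le_of_dvd hx hd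
          omega
        · have h1 := Nat.le_of_dvd hy ((h' (x + i) hx).mp dvd_rfl)
          have h2 := Nat.le_of_dvd hx ((h' (y + i) hy).mpr dvd_rfl)
          omega
    exact Nat.add_right_cancel this
  · intro a b h
    have h' : ∀ x : ℕ, (a.1 ∣ x + i) ↔ (b.1 ∣ x + i) := by
      intro x
      have := h (show (divChu i).X from x)
      simpa [divChu] using this
    have key : ∀ u v : {n : ℕ // 0 < n},
        (∀ x : ℕ, (u.1 ∣ x + i) → (v.1 ∣ x + i)) → v.1 ∣ u.1 := by
      intro u v hd
      have h1 : v.1 ∣ u.1 * (i + 1) := by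
        have hx : u.1 * (i + 1) - i + i = u.1 * (i + 1) := by
          have : i + 1 ≤ u.1 * (i + 1) := Nat.le_mul_of_pos_left _ u.2
          omega
        have := hd (u.1 * (i + 1) - i) (by rw [hx]; exact Dvd.intro _ rfl)
        rwa [hx] at this
      have h2 : v.1 ∣ u.1 * (i + 2) := by
        have hx : u.1 * (i + 2) - i + i = u.1 * (i + 2) := by
          have : i + 2 ≤ u.1 * (i + 2) := Nat.le_mul_of_pos_left _ u.2
          omega
        have := hd (u.1 * (i + 2) - i) (by rw [hx]; exact Dvd.intro _ rfl)
        rwa [hx] at this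
      have heq : u.1 * (i + 2) = u.1 * (i + 1) + u.1 := by ring
      rw [heq] at h2
      exact (Nat.dvd_add_right h1).mp h2
    have hba : b.1 ∣ a.1 := key a b (fun x => (h' x).mp)
    have hab : a.1 ∣ b.1 := key b a (fun x => (h' x).mpr)
    exact Subtype.ext (Nat.dvd_antisymm hab hba)

theorem cocone_emptyX (C : ChuSpace.{0} Bool) (c : Cocone divSeq C) : IsEmpty C.X := by
  constructor
  intro x
  let n : ℕ → ℕ := fun i => (c.ψ i).g x
  have key : ∀ i, n i = n (i+1) + 1 := by
    intro i
    have hg := congrArg ChuHom.g (c.compat i)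
    have := congrFun hg x
    exact this.symm
  have mono : ∀ i, n 0 = n i + i := by
    intro i
    induction i with
    | zero => rfl
    | succ m ih => rw [ih, key m]; omega
  have := mono (n 0 + 1)
  omega

theorem no_iB_cocone :
    ¬ ∃ (C : ChuSpace.{0} Bool) (c : Cocone divSeq C),
      ChuBiextensional C ∧ ∀ i, IsMonoE (c.ψ i) := by
  rintro ⟨C, c, ⟨_, hsep⟩, hmono⟩
  have hX : IsEmpty C.X := cocone_emptyX C c
  have hinj := hmono 0
  have h12 : (⟨1, one_pos⟩ : {n : ℕ // 0 < n}) ≠ ⟨2, two_pos⟩ := by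
    intro h; simpa using congrArg Subtype.val h
  apply h12
  apply hinj
  exact hsep _ _ (fun x => (hX.false x).elim)

/-- An ω-sequence of infinite biextensional Chu spaces with no colimit in `iB`:
every cocone from the divisibility sequence has an empty attribute set at its vertex,
hence there is no cocone in `iB` (to a biextensional space, with monic morphisms)
and no colimit in `iB`. -/
theorem stmt14 :
    (∀ i, ChuBiextensional (divChu i)) ∧
    (∀ (C : ChuSpace.{0} Bool) (_ : Cocone divSeq C), IsEmpty C.X) ∧
    (¬ ∃ (C : ChuSpace.{0} Bool) (c : Cocone divSeq C),
      ChuBiextensional C ∧ ∀ i, IsMonoE (c.ψ i)) ∧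
    (¬ ∃ (C : ChuSpace.{0} Bool) (c : Cocone divSeq C),
      IsColimit ChuBiextensional (fun _ _ φ => IsMonoE φ) divSeq C c) := by
  refine ⟨divChu_biext, cocone_emptyX, no_iB_cocone, ?_⟩
  rintro ⟨C, c, hcol⟩
  exact no_iB_cocone ⟨C, c, hcol.obj, hcol.mor⟩
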